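/- Let X be a Banach space with a 1-unconditional basis, Y = [x_n] a block subspace with ∪_n supp x_n = ℕ, T: Y → X bounded with supp(T x_n) ⊆ supp(x_n) for all n. Fix k ∈ ℕ, define A_k = ∪_n {i ∈ supp x_n : |x_n(i)| ≤ 2^{-k}|T x_n(i)|}, let D_k be the diagonal operator with D_k e_i = 0 for i ∈ A_k and D_k e_i = (T x_n(i)/x_n(i)) e_i for i ∈ supp x_n \ A_k, and T_k = P_{A_k} ∘ T. Then D_k is bounded with ‖D_k‖ ≤ 2^k, and T = D_k|_Y + T_k. -/

import Mathlib

open scoped BigOperators Classical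
open Filter Topology

structure SchauderBasisOld (X : Type*) [NormedAddCommGroup X] [NormedSpace ℝ X] where
  e : ℕ → X
  coord : ℕ → X →L[ℝ] ℝ
  ortho : ∀ i j, coord i (e j) = if i = j then 1 else 0
  expansion : ∀ x : X, HasSum (fun i => coord i x • e i) x

section Defs

variable {X : Type*} [NormedAddCommGroup X] [NormedSpace ℝ X]

def SchauderBasisOld.IsUnconditionalWith (b : SchauderBasisOld X) (C : ℝ) : Prop :=
  ∀ x y : X, (∀ i, |b.coord i y| ≤ |b.coord i x|) → ‖y‖ ≤ C * ‖x‖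

def SchauderBasisOld.supp (b : SchauderBasisOld X) (x : X) : Set ℕ := {i | b.coord i x ≠ 0}

def StrictlySingular {E F : Type*} [NormedAddCommGroup E] [NormedSpace ℝ E]
    [NormedAddCommGroup F] [NormedSpace ℝ F] (T : E →L[ℝ] F) : Prop :=
  ∀ Y : Submodule ℝ E, ¬ FiniteDimensional ℝ Y →
    ¬ ∃ c : ℝ, 0 < c ∧ ∀ y ∈ Y, c * ‖y‖ ≤ ‖T y‖

def SchauderBasisOld.TightBySupport (b : SchauderBasisOld X) : Prop :=
  ∀ Y Z : Submodule ℝ X, IsClosed (Y : Set X) → IsClosed (Z : Set X) →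
    ¬ FiniteDimensional ℝ Y → ¬ FiniteDimensional ℝ Z →
    (∀ y ∈ Y, ∀ z ∈ Z, ∀ i, b.coord i y ≠ 0 → b.coord i z = 0) →
    IsEmpty (Y ≃L[ℝ] Z)

def SchauderBasisOld.IsBlockSequence (b : SchauderBasisOld X) (x : ℕ → X) : Prop :=
  (∀ n, x n ≠ 0) ∧ (∀ n, (b.supp (x n)).Finite) ∧
    ∀ m n i j, m < n → b.coord i (x m) ≠ 0 → b.coord j (x n) ≠ 0 → i < j

def closedSpan (x : ℕ → X) : Submodule ℝ X :=
  (Submodule.span ℝ (Set.range x)).topologicalClosure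

def SchauderBasisOld.IsDiagonal (b : SchauderBasisOld X) (D : X →L[ℝ] X) : Prop :=
  ∀ i, ∃ lam : ℝ, D (b.e i) = lam • b.e i

def IsL1Average (b : SchauderBasisOld X) (x : X) (n : ℕ) (c : ℝ) : Prop :=
  0 < n ∧ 1 ≤ c ∧ ∃ xs : Fin n → X,
    (∀ i, ‖xs i‖ ≤ 1) ∧
    (∀ i j : Fin n, i < j → ∀ p q, b.coord p (xs i) ≠ 0 → b.coord q (xs j) ≠ 0 → p < q) ∧
    x = (n : ℝ)⁻¹ • ∑ i, xs i ∧ 1 / c ≤ ‖x‖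

end Defs

private lemma coord_eq_of_hasSum {X : Type*} [NormedAddCommGroup X] [NormedSpace ℝ X]
    (b : SchauderBasisOld X) (v : X) (f : ℕ → ℝ)
    (hf : HasSum (fun i => f i • b.e i) v) (j : ℕ) : b.coord j v = f j := by
  have h1 : HasSum (fun i => b.coord j (f i • b.e i)) (b.coord j v) := (b.coord j).hasSum hf
  have h2 : (fun i => b.coord j (f i • b.e i)) = fun i => if i = j then f j else 0 := by
    funext i
    rw [map_smul, b.ortho, smul_eq_mul]
    by_cases h : i = j
    · subst h; simp
    · simp [h, Ne.symm h]
  rw [h2] at h1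
  exact h1.unique (hasSum_ite_eq j (f j))

private lemma ext_coord {X : Type*} [NormedAddCommGroup X] [NormedSpace ℝ X]
    (b : SchauderBasisOld X) (v w : X) (h : ∀ j, b.coord j v = b.coord j w) : v = w := by
  have hv := b.expansion v
  simp_rw [h] at hv
  exact hv.unique (b.expansion w)

/-- with A_k and the diagonal operator D_k (vanishing on A_k and
with entries T xₙ(i)/xₙ(i) off A_k) and T_k = P_{A_k} ∘ T, one has
‖D_k‖ ≤ 2^k and T = D_k|_Y + T_k. -/
theorem stmt15 {X : Type*} [NormedAddCommGroup X] [NormedSpace ℝ X] [CompleteSpace X]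
    (b : SchauderBasisOld X) (hb : b.IsUnconditionalWith 1)
    (x : ℕ → X) (hx : b.IsBlockSequence x)
    (hmem : ∀ n, x n ∈ closedSpan x)
    (hfull : ∀ i, ∃ n, b.coord i (x n) ≠ 0)
    (T : ↥(closedSpan x) →L[ℝ] X)
    -- supp(T xₙ) ⊆ supp(xₙ)
    (hsupp : ∀ n i, b.coord i (T ⟨x n, hmem n⟩) ≠ 0 → b.coord i (x n) ≠ 0)
    (k : ℕ) (A : Set ℕ)
    (hA : A = {i | ∃ n, b.coord i (x n) ≠ 0 ∧
      |b.coord i (x n)| ≤ (2 : ℝ)⁻¹ ^ k * |b.coord i (T ⟨x n, hmem n⟩)|})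
    (μ : ℕ → ℝ)
    (hμ : ∀ n i, b.coord i (x n) ≠ 0 →
      μ i = b.coord i (T ⟨x n, hmem n⟩) / b.coord i (x n))
    (D : X →L[ℝ] X)
    (hD : ∀ i, D (b.e i) = (if i ∈ A then 0 else μ i) • b.e i)
    (P : Set ℕ → (X →L[ℝ] X))
    (hP : ∀ (G : Set ℕ) (u : X) (i : ℕ),
      b.coord i (P G u) = if i ∈ G then b.coord i u else 0) :
    ‖D‖ ≤ (2 : ℝ) ^ k ∧ ∀ u : ↥(closedSpan x), T u = D (u : X) + P A (T u) := by
  -- coordinates of D u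
  have hDcoord : ∀ (u : X) (j : ℕ),
      b.coord j (D u) = (if j ∈ A then 0 else μ j) * b.coord j u := by
    intro u j
    have hf : HasSum (fun i => ((if i ∈ A then 0 else μ i) * b.coord i u) • b.e i) (D u) := by
      have h := D.hasSum (b.expansion u)
      have he : (fun i => D (b.coord i u • b.e i))
          = fun i => ((if i ∈ A then 0 else μ i) * b.coord i u) • b.e i := by
        funext i
        rw [map_smul, hD i, smul_smul, mul_comm]
      rwa [he] at h
    exact coord_eq_of_hasSum b _ _ hf j
  -- |μ j| ≤ 2^k off A
  have hμbound : ∀ j, |if j ∈ A then 0 else μ j| ≤ (2 : ℝ) ^ k := by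
    intro j
    by_cases hj : j ∈ A
    · simp [hj, pow_nonneg (by norm_num : (0:ℝ) ≤ 2) k]
    · simp only [hj, if_false]
      obtain ⟨n, hn⟩ := hfull j
      have hnotle : ¬ |b.coord j (x n)| ≤ (2 : ℝ)⁻¹ ^ k * |b.coord j (T ⟨x n, hmem n⟩)| := by
        intro hle
        exact hj (hA ▸ ⟨n, hn, hle⟩)
      push_neg at hnotle
      rw [hμ n j hn, abs_div]
      rw [div_le_iff₀ (abs_pos.mpr hn)]
      have h2 : (2 : ℝ)⁻¹ ^ k * |b.coord j (T ⟨x n, hmem n⟩)| < |b.coord j (x n)| := hnotle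
      have hpow : (2 : ℝ)⁻¹ ^ k = ((2 : ℝ) ^ k)⁻¹ := by rw [inv_pow]
      rw [hpow] at h2
      have hpos : (0 : ℝ) < (2 : ℝ) ^ k := by positivity
      rw [inv_mul_lt_iff₀ hpos] at h2
      linarith
  constructor
  · apply D.opNorm_le_bound (by positivity)
    intro u
    have : ‖D u‖ ≤ 1 * ‖(2 : ℝ) ^ k • u‖ := by
      apply hb
      intro i
      rw [hDcoord u i, map_smul, smul_eq_mul, abs_mul, abs_mul]
      apply mul_le_mul_of_nonneg_right _ (abs_nonneg _)
      simpa using hμbound i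
    rwa [one_mul, norm_smul, Real.norm_eq_abs, abs_of_nonneg (by positivity : (0:ℝ) ≤ (2:ℝ)^k)] at this
  · -- equality of operators
    have key : ∀ n, T ⟨x n, hmem n⟩ = D (x n) + P A (T ⟨x n, hmem n⟩) := by
      intro n
      apply ext_coord b
      intro j
      rw [map_add, hDcoord, hP]
      by_cases hj : j ∈ A
      · have hμj : (if j ∈ A then 0 else μ j) = 0 := by simp [hj]
        rw [hμj, if_pos hj]; ring
      · rw [if_neg hj, if_neg hj, add_zero]
        by_cases hc : b.coord j (x n) = 0
        · have : b.coord j (T ⟨x n, hmem n⟩) = 0 := by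
            by_contra h
            exact (hsupp n j h) hc
          rw [this, hc, mul_zero]
        · rw [hμ n j hc, div_mul_cancel₀ _ hc]
    -- extend by density
    have hdense : Dense (↑(Submodule.span ℝ
        (Set.range (fun n => (⟨x n, hmem n⟩ : ↥(closedSpan x))))) : Set ↥(closedSpan x)) := by
      intro u
      rw [closure_subtype]
      have h2 : Subtype.val '' (Set.range (fun n => (⟨x n, hmem n⟩ : ↥(closedSpan x))))
          = Set.range x := by
        ext v
        constructor
        · rintro ⟨w, ⟨n, rfl⟩, rfl⟩; exact ⟨n, rfl⟩
        · rintro ⟨n, rfl⟩; exact ⟨⟨x n, hmem n⟩, ⟨n, rfl⟩, rfl⟩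
      have himg : Subtype.val '' (↑(Submodule.span ℝ
            (Set.range (fun n => (⟨x n, hmem n⟩ : ↥(closedSpan x))))) : Set ↥(closedSpan x))
          = ↑(Submodule.span ℝ (Set.range x)) := by
        have h1 : Subtype.val '' (↑(Submodule.span ℝ
              (Set.range (fun n => (⟨x n, hmem n⟩ : ↥(closedSpan x))))) : Set ↥(closedSpan x))
            = ↑(Submodule.map (closedSpan x).subtype (Submodule.span ℝ
              (Set.range (fun n => (⟨x n, hmem n⟩ : ↥(closedSpan x)))))) := rfl
        have h2' : ⇑(closedSpan x).subtype ''
            (Set.range fun n => (⟨x n, hmem n⟩ : ↥(closedSpan x))) = Set.range x := h2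
        rw [h1, Submodule.map_span, h2']
      rw [himg]
      have hu : (u : X) ∈ (Submodule.span ℝ (Set.range x)).topologicalClosure := u.2
      rwa [← SetLike.mem_coe, Submodule.topologicalClosure_coe] at hu
    have heq : T = D.comp (closedSpan x).subtypeL + (P A).comp T := by
      apply ContinuousLinearMap.ext_on hdense
      rintro _ ⟨n, rfl⟩
      simpa using key n
    intro u
    have := congrFun (congrArg (DFunLike.coe) heq) u
    simpa using this
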